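/- Let two agents have additive valuations v_1, v_2 over items o_1, …, o_m arriving one per round, where for each item o either both v_1(o) ≤ 0 and v_2(o) ≤ 0, or both v_1(o) ≥ 0 and v_2(o) ≥ 0 (mixed manna with agreed signs). Define augmented valuations v'_i(o) = |v_i(o)|. Suppose B = (B_1, B_2) is an allocation that is TEF1 with respect to (v'_1, v'_2) treating all items as goods. Let G^t, C^t denote the goods and chores (under the original valuations) among the first t items, and define A by giving agent 1 the goods of B_1 and the chores of B_2, and agent 2 the goods of B_2 and the chores of B_1. Then A is TEF1 with respect to the original valuations: for every t and i ≠ j, there exists an item o ∈ A_i^t ∪ A_j^t with v_i(A_i^t \ {o}) ≥ v_i(A_j^t \ {o}). -/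

import Mathlib

open Finset

def bundle {n m : ℕ} (A : Fin m → Fin n) (S : Finset (Fin m)) (i : Fin n) : Finset (Fin m) :=
  S.filter (fun j => A j = i)

def bval {m : ℕ} (v : Fin m → ℝ) (B : Finset (Fin m)) : ℝ := ∑ j ∈ B, v j

/-- The other agent, for two agents. -/
def other : Fin 2 → Fin 2 := fun i => i + 1

/-- The mixed-manna allocation derived from `B`: each good keeps its owner, and
each chore is given to the other agent. -/
noncomputable def mixedAlloc {m : ℕ} (v : Fin 2 → Fin m → ℝ) (B : Fin m → Fin 2) (j : Fin m) : Fin 2 :=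
  if 0 ≤ v 0 j ∧ 0 ≤ v 1 j then B j else other (B j)

/-- Two agents, mixed manna with agreed signs. If `B` is TEF1 for the augmented
(absolute-value) valuations treating all items as goods, then the allocation that
keeps the goods and swaps the chores is TEF1 for the original valuations, in the
mixed-manna sense. -/
theorem stmt17 (m : ℕ) (v : Fin 2 → Fin m → ℝ)
    (hsign : ∀ j, (v 0 j ≤ 0 ∧ v 1 j ≤ 0) ∨ (0 ≤ v 0 j ∧ 0 ≤ v 1 j))
    (B : Fin m → Fin 2)
    (hB : ∀ t : Fin m, ∀ i j : Fin 2, i ≠ j →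
      bundle B (Finset.univ.filter (fun o => o ≤ t)) j = ∅ ∨
      ∃ o ∈ bundle B (Finset.univ.filter (fun o => o ≤ t)) j,
        bval (fun x => |v i x|) (bundle B (Finset.univ.filter (fun o => o ≤ t)) i) ≥
          bval (fun x => |v i x|)
            ((bundle B (Finset.univ.filter (fun o => o ≤ t)) j).erase o)) :
    ∀ t : Fin m, ∀ i j : Fin 2, i ≠ j →
      ∃ o ∈ bundle (mixedAlloc v B) (Finset.univ.filter (fun o => o ≤ t)) i ∪
            bundle (mixedAlloc v B) (Finset.univ.filter (fun o => o ≤ t)) j,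
        bval (v i) ((bundle (mixedAlloc v B) (Finset.univ.filter (fun o => o ≤ t)) i).erase o) ≥
          bval (v i) ((bundle (mixedAlloc v B) (Finset.univ.filter (fun o => o ≤ t)) j).erase o) := by
  classical
  intro t i j hij
  set S : Finset (Fin m) := Finset.univ.filter (fun o : Fin m => o ≤ t) with hSdef
  have htS : t ∈ S := by simp [hSdef]
  set P : Fin m → Prop := fun x => 0 ≤ v 0 x ∧ 0 ≤ v 1 x with hPdef
  have hpos : ∀ (a : Fin 2) x, P x → 0 ≤ v a x := by
    intro a x hx
    fin_cases a
    · exact hx.1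
    · exact hx.2
  have hneg : ∀ (a : Fin 2) x, ¬ P x → v a x ≤ 0 := by
    intro a x hx
    rcases hsign x with h | h
    · fin_cases a
      · exact h.1
      · exact h.2
    · exact absurd h hx
  have hoth2 : ∀ a b c : Fin 2, a ≠ b → (other c = a ↔ c = b) := by decide
  have hall : ∀ a b c : Fin 2, a ≠ b → (c = a ∨ c = b) := by decide
  -- disjointness of bundles
  have hBdisj : ∀ (A : Fin m → Fin 2) (a b : Fin 2), a ≠ b →
      ∀ x, x ∈ bundle A S a → x ∉ bundle A S b := by
    intro A a b hab x hxa hxb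
    simp only [bundle, Finset.mem_filter] at hxa hxb
    exact hab (hxa.2.symm.trans hxb.2)
  -- decomposition of mixedAlloc bundles
  have hdec : ∀ a b : Fin 2, a ≠ b →
      bundle (mixedAlloc v B) S a =
        (bundle B S a).filter P ∪ (bundle B S b).filter (fun x => ¬ P x) := by
    intro a b hab
    ext x
    simp only [bundle, mixedAlloc, Finset.mem_union, Finset.mem_filter, hPdef]
    by_cases hx : (0 ≤ v 0 x ∧ 0 ≤ v 1 x)
    · refine Finset.mem_filter.trans ?_; simp [hx, hSdef]
    · refine Finset.mem_filter.trans ?_; simp [hx, hSdef, hoth2 a b (B x) hab]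
  have habs : ∀ (a : Fin 2) (T : Finset (Fin m)),
      bval (fun x => |v a x|) T =
        bval (v a) (T.filter P) - bval (v a) (T.filter (fun x => ¬ P x)) := by
    intro a T
    have h1 : ∑ x ∈ T.filter P, |v a x| = ∑ x ∈ T.filter P, v a x :=
      Finset.sum_congr rfl fun x hx => abs_of_nonneg (hpos a x (Finset.mem_filter.mp hx).2)
    have h2 : ∑ x ∈ T.filter (fun x => ¬ P x), |v a x|
        = ∑ x ∈ T.filter (fun x => ¬ P x), -(v a x) :=
      Finset.sum_congr rfl fun x hx => abs_of_nonpos (hneg a x (Finset.mem_filter.mp hx).2)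
    simp only [bval]
    rw [← Finset.sum_filter_add_sum_filter_not T P, h1, h2, Finset.sum_neg_distrib]
    ring
  set Bi := bundle B S i with hBi
  set Bj := bundle B S j with hBj
  set Gi := Bi.filter P with hGi
  set Ci := Bi.filter (fun x => ¬ P x) with hCi
  set Gj := Bj.filter P with hGj
  set Cj := Bj.filter (fun x => ¬ P x) with hCj
  have hdecI : bundle (mixedAlloc v B) S i = Gi ∪ Cj := hdec i j hij
  have hdecJ : bundle (mixedAlloc v B) S j = Gj ∪ Ci := hdec j i hij.symm
  have hsubGi : Gi ⊆ Bi := Finset.filter_subset _ _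
  have hsubCi : Ci ⊆ Bi := Finset.filter_subset _ _
  have hsubGj : Gj ⊆ Bj := Finset.filter_subset _ _
  have hsubCj : Cj ⊆ Bj := Finset.filter_subset _ _
  have hdGiCj : Disjoint Gi Cj := Finset.disjoint_left.mpr
    fun x hx hx' => hBdisj B i j hij x (hsubGi hx) (hsubCj hx')
  have hdGjCi : Disjoint Gj Ci := Finset.disjoint_left.mpr
    fun x hx hx' => hBdisj B j i hij.symm x (hsubGj hx) (hsubCi hx')
  rcases hB t i j hij with hempty0 | ⟨o, hoBj0, hineq0⟩
  · -- Bj is empty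
    refine ⟨t, ?_, ?_⟩
    · rw [Finset.mem_union, hdecI, hdecJ]
      rcases hall i j (mixedAlloc v B t) hij with h | h
      · exact Or.inl (by rw [← hdecI]; simpa [bundle] using ⟨htS, h⟩)
      · exact Or.inr (by rw [← hdecJ]; simpa [bundle] using ⟨htS, h⟩)
    · rw [hdecI, hdecJ]
      have hempty : Bj = ∅ := hempty0
      have hGj0 : Gj = ∅ := by rw [hGj, hempty]; simp
      have hCj0 : Cj = ∅ := by rw [hCj, hempty]; simp
      rw [hGj0, hCj0, Finset.union_empty, Finset.empty_union]
      have h1 : (0:ℝ) ≤ bval (v i) (Gi.erase t) :=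
        Finset.sum_nonneg fun x hx =>
          hpos i x (Finset.mem_filter.mp (Finset.mem_of_mem_erase hx)).2
      have h2 : bval (v i) (Ci.erase t) ≤ 0 :=
        Finset.sum_nonpos fun x hx =>
          hneg i x (Finset.mem_filter.mp (Finset.mem_of_mem_erase hx)).2
      linarith
  · -- main case
    have hoBj : o ∈ Bj := hoBj0
    have hineq : bval (fun x => |v i x|) Bi ≥ bval (fun x => |v i x|) (Bj.erase o) := hineq0
    have honi : o ∉ Bi := fun h => hBdisj B i j hij o h hoBj
    rw [habs i Bi, habs i (Bj.erase o), Finset.filter_erase, Finset.filter_erase,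
      ← hGi, ← hCi, ← hGj, ← hCj] at hineq
    by_cases hPo : P o
    · -- o is a good, o ∈ Gj ⊆ A_j
      have hoGj : o ∈ Gj := Finset.mem_filter.mpr ⟨hoBj, hPo⟩
      have hoCj : o ∉ Cj := fun h => (Finset.mem_filter.mp h).2 hPo
      have hoGi : o ∉ Gi := fun h => honi (hsubGi h)
      have hoCi : o ∉ Ci := fun h => honi (hsubCi h)
      refine ⟨o, ?_, ?_⟩
      · rw [Finset.mem_union, hdecJ]
        exact Or.inr (Finset.mem_union_left _ hoGj)
      · rw [hdecI, hdecJ]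
        rw [Finset.erase_eq_of_notMem (by simp [Finset.mem_union, hoGi, hoCj]),
          Finset.erase_union_distrib, Finset.erase_eq_of_notMem hoCi]
        have hd2 : Disjoint (Gj.erase o) Ci := Finset.disjoint_of_subset_left
          (Finset.erase_subset _ _) hdGjCi
        simp only [bval, Finset.sum_union hdGiCj, Finset.sum_union hd2, ge_iff_le]
        have hCjE : Cj.erase o = Cj := Finset.erase_eq_of_notMem hoCj
        rw [hCjE] at hineq
        simp only [bval, ge_iff_le] at hineq
        linarith
    · -- o is a chore, o ∈ Cj ⊆ A_i
      have hoCj : o ∈ Cj := Finset.mem_filter.mpr ⟨hoBj, hPo⟩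
      have hoGj : o ∉ Gj := fun h => hPo (Finset.mem_filter.mp h).2
      have hoGi : o ∉ Gi := fun h => honi (hsubGi h)
      have hoCi : o ∉ Ci := fun h => honi (hsubCi h)
      refine ⟨o, ?_, ?_⟩
      · rw [Finset.mem_union, hdecI]
        exact Or.inl (Finset.mem_union_right _ hoCj)
      · rw [hdecI, hdecJ]
        rw [Finset.erase_eq_of_notMem (s := Gj ∪ Ci) (by simp [Finset.mem_union, hoGj, hoCi]),
          Finset.erase_union_distrib, Finset.erase_eq_of_notMem hoGi]
        have hd2 : Disjoint Gi (Cj.erase o) := Finset.disjoint_of_subset_right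
          (Finset.erase_subset _ _) hdGiCj
        simp only [bval, Finset.sum_union hd2, Finset.sum_union hdGjCi, ge_iff_le]
        have hGjE : Gj.erase o = Gj := Finset.erase_eq_of_notMem hoGj
        rw [hGjE] at hineq
        simp only [bval, ge_iff_le] at hineq
        linarith
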